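/- For integers 0 < l_1 < l_2 < ... < l_q, there exist positive reals k_1, ..., k_q such that the polynomial P(x) = 1 - k_1 x^{l_1} + k_2 x^{l_2} - ... + (-1)^q k_q x^{l_q} has q distinct positive real roots 0 < x_1 < x_2 < ... < x_q, and moreover P'(x_i) < 0 for i odd and P'(x_i) > 0 for i even. -/

import Mathlib

open Polynomial Finset Set Filter Topology

private lemma grab_posMin {q : ℕ} (f : Fin q → ℝ) (hf : ∀ i, 0 < f i) :
    ∃ δ : ℝ, 0 < δ ∧ ∀ i, δ ≤ f i := by
  rcases isEmpty_or_nonempty (Fin q) with h | h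
  · exact ⟨1, one_pos, fun i => isEmptyElim i⟩
  · refine ⟨Finset.univ.inf' ⟨Classical.arbitrary _, Finset.mem_univ _⟩ f, ?_,
      fun i => Finset.inf'_le f (Finset.mem_univ i)⟩
    refine (Finset.lt_inf'_iff _).2 ?_
    exact fun i _ => hf i

private lemma grab_ub {q : ℕ} (f : Fin q → ℝ) : ∃ M : ℝ, ∀ i, f i ≤ M := by
  rcases isEmpty_or_nonempty (Fin q) with h | h
  · exact ⟨0, fun i => isEmptyElim i⟩
  · exact ⟨Finset.univ.sup' ⟨Classical.arbitrary _, Finset.mem_univ _⟩ f,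
      fun i => Finset.le_sup' f (Finset.mem_univ i)⟩

private lemma grab_sign_near {f : ℝ → ℝ} {x d : ℝ} (hf : HasDerivAt f d x) (h0 : f x = 0)
    (hd : d ≠ 0) {δ : ℝ} (hδ : 0 < δ) :
    ∃ a b : ℝ, x - δ < a ∧ a < x ∧ x < b ∧ b < x + δ ∧ d * f a < 0 ∧ 0 < d * f b := by
  have hs : Tendsto (slope f x) (𝓝[≠] x) (𝓝 d) := hasDerivAt_iff_tendsto_slope.1 hf
  have hds : Tendsto (fun t => d * slope f x t) (𝓝[≠] x) (𝓝 (d * d)) := hs.const_mul d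
  have hdd : (0:ℝ) < d * d := mul_self_pos.2 hd
  have hev : ∀ᶠ t in 𝓝[≠] x, 0 < d * slope f x t := hds.eventually (eventually_gt_nhds hdd)
  have hslope : ∀ t : ℝ, slope f x t = f t / (t - x) := by
    intro t; rw [slope_def_field, h0]; ring_nf
  have hb : ∃ b, b ∈ Ioo x (x + δ) ∧ 0 < d * slope f x b := by
    have h1 : ∀ᶠ t in 𝓝[>] x, 0 < d * slope f x t :=
      hev.filter_mono (nhdsWithin_mono x (fun t ht => ne_of_gt ht))
    have h2 : ∀ᶠ t in 𝓝[>] x, t ∈ Ioo x (x + δ) :=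
      Filter.eventually_of_mem (Ioo_mem_nhdsGT (by linarith)) (fun t ht => ht)
    exact ((h2.and h1).exists).imp fun b hb => ⟨hb.1, hb.2⟩
  have ha : ∃ a, a ∈ Ioo (x - δ) x ∧ 0 < d * slope f x a := by
    have h1 : ∀ᶠ t in 𝓝[<] x, 0 < d * slope f x t :=
      hev.filter_mono (nhdsWithin_mono x (fun t ht => ne_of_lt ht))
    have h2 : ∀ᶠ t in 𝓝[<] x, t ∈ Ioo (x - δ) x :=
      Filter.eventually_of_mem (Ioo_mem_nhdsLT (by linarith)) (fun t ht => ht)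
    exact ((h2.and h1).exists).imp fun a ha => ⟨ha.1, ha.2⟩
  obtain ⟨b, hbmem, hbpos⟩ := hb
  obtain ⟨a, hamem, hapos⟩ := ha
  rw [hslope] at hbpos hapos
  refine ⟨a, b, hamem.1, hamem.2, hbmem.1, hbmem.2, ?_, ?_⟩
  · have hax : a - x < 0 := by linarith [hamem.2]
    have hne : a - x ≠ 0 := ne_of_lt hax
    have heq : d * f a = d * (f a / (a - x)) * (a - x) := by
      field_simp
    rw [heq]
    exact mul_neg_of_pos_of_neg hapos hax
  · have hbx : 0 < b - x := by linarith [hbmem.1]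
    have hne : b - x ≠ 0 := ne_of_gt hbx
    have heq : d * f b = d * (f b / (b - x)) * (b - x) := by
      field_simp
    rw [heq]
    exact mul_pos hbpos hbx

private lemma grab_ivt {f : ℝ → ℝ} (hf : Continuous f) {a b u : ℝ} (hab : a < b)
    (ha : u * f a < 0) (hb : 0 < u * f b) : ∃ x ∈ Ioo a b, f x = 0 := by
  rcases lt_trichotomy u 0 with hu | hu | hu
  · have h1 : 0 < f a := by nlinarith
    have h2 : f b < 0 := by nlinarith
    obtain ⟨x, hx, hfx⟩ := intermediate_value_Ioo' hab.le hf.continuousOn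
      (⟨h2, h1⟩ : (0:ℝ) ∈ Ioo (f b) (f a))
    exact ⟨x, hx, hfx⟩
  · simp [hu] at ha
  · have h1 : f a < 0 := by nlinarith
    have h2 : 0 < f b := by nlinarith
    obtain ⟨x, hx, hfx⟩ := intermediate_value_Ioo hab.le hf.continuousOn
      (⟨h1, h2⟩ : (0:ℝ) ∈ Ioo (f a) (f b))
    exact ⟨x, hx, hfx⟩

private lemma grab_same_sign {y z : ℝ} (h : |y - z| < |z|) :
    (0 < z → 0 < y) ∧ (z < 0 → y < 0) := by
  rw [abs_lt] at h
  rcases le_or_gt z 0 with hz | hz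
  · rw [abs_of_nonpos hz] at h
    exact ⟨fun h' => absurd h' (not_lt.2 hz), fun _ => by linarith [h.2]⟩
  · rw [abs_of_pos hz] at h
    exact ⟨fun _ => by linarith [h.1], fun h' => absurd h' (not_lt.2 hz.le)⟩

private lemma grab_mul_sign_neg {u y z : ℝ} (h : |y - z| < |z|) (h2 : u * z < 0) : u * y < 0 := by
  rcases lt_trichotomy z 0 with hz | hz | hz
  · have hy : y < 0 := (grab_same_sign h).2 hz
    have hu : 0 < u := by nlinarith
    exact mul_neg_of_pos_of_neg hu hy
  · simp [hz] at h2
  · have hy : 0 < y := (grab_same_sign h).1 hz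
    have hu : u < 0 := by nlinarith
    exact mul_neg_of_neg_of_pos hu hy

private lemma grab_mul_sign_pos {u y z : ℝ} (h : |y - z| < |z|) (h2 : 0 < u * z) : 0 < u * y := by
  rcases lt_trichotomy z 0 with hz | hz | hz
  · have hy : y < 0 := (grab_same_sign h).2 hz
    have hu : u < 0 := by nlinarith
    exact mul_pos_of_neg_of_neg hu hy
  · simp [hz] at h2
  · have hy : 0 < y := (grab_same_sign h).1 hz
    have hu : 0 < u := by nlinarith
    exact mul_pos hu hy

noncomputable def grabPol (q : ℕ) (l : Fin q → ℕ) (k : Fin q → ℝ) : Polynomial ℝ :=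
  1 + ∑ i : Fin q, C ((-1) ^ (i.val + 1) * k i) * X ^ (l i)

lemma grabPol_eval (q : ℕ) (l : Fin q → ℕ) (k : Fin q → ℝ) (t : ℝ) :
    (grabPol q l k).eval t = 1 + ∑ i : Fin q, (-1) ^ (i.val + 1) * k i * t ^ (l i) := by
  simp [grabPol, eval_finset_sum, mul_comm, mul_assoc]

lemma grabPol_eval_zero (q : ℕ) (l : Fin q → ℕ) (k : Fin q → ℝ) (h : ∀ i, 0 < l i) :
    (grabPol q l k).eval 0 = 1 := by
  rw [grabPol_eval]
  rw [Finset.sum_eq_zero, add_zero]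
  intro i _
  rw [zero_pow (h i).ne', mul_zero]

lemma grabPol_degree_lt (q : ℕ) (l : Fin q → ℕ) (k : Fin q → ℝ) {L : ℕ} (hL : 0 < L)
    (h : ∀ i, l i < L) : (grabPol q l k).degree < (L : ℕ) := by
  unfold grabPol
  apply lt_of_le_of_lt (degree_add_le _ _)
  rw [max_lt_iff]
  constructor
  · apply lt_of_le_of_lt degree_one_le
    exact_mod_cast hL
  · apply lt_of_le_of_lt (degree_sum_le _ _)
    rw [Finset.sup_lt_iff (by exact_mod_cast WithBot.bot_lt_coe L)]
    intro i _
    apply lt_of_le_of_lt (degree_C_mul_X_pow_le _ _)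
    exact_mod_cast h i

lemma grabPol_snoc (q : ℕ) (l : Fin (q + 1) → ℕ) (k : Fin q → ℝ) (ε : ℝ) :
    grabPol (q + 1) l (Fin.snoc k ε) =
      grabPol q (fun i => l i.castSucc) k + C ((-1) ^ (q + 1) * ε) * X ^ (l (Fin.last q)) := by
  unfold grabPol
  rw [Fin.sum_univ_castSucc]
  simp only [Fin.snoc_castSucc, Fin.snoc_last, Fin.coe_castSucc, Fin.val_last]
  ring

lemma grab_dom {p : Polynomial ℝ} {L : ℕ} (hL : 0 < L) (hdeg : p.degree < (L : ℕ)) {ε : ℝ}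
    (hε : 0 < ε) : ∀ᶠ t in atTop, |p.eval t| < ε * t ^ L := by
  have hCX : degree (C ε * X ^ L : Polynomial ℝ) = (L : ℕ) := degree_C_mul_X_pow L (ne_of_gt hε)
  have hlc : (C ε * X ^ L : Polynomial ℝ).leadingCoeff = ε := leadingCoeff_C_mul_X_pow ε L
  have key : ∀ (s : Polynomial ℝ), s.degree < (L:ℕ) →
      Tendsto (fun t => (C ε * X ^ L + s).eval t) atTop atTop := by
    intro s hs
    apply Polynomial.tendsto_atTop_of_leadingCoeff_nonneg
    · rw [degree_add_eq_left_of_degree_lt (by rw [hCX]; exact hs)]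
      rw [hCX]
      exact_mod_cast hL
    · rw [leadingCoeff_add_of_degree_lt' (by rw [hCX]; exact hs), hlc]
      exact hε.le
  have h1 := (key (-p) (by rwa [degree_neg])).eventually_gt_atTop 0
  have h2 := (key p hdeg).eventually_gt_atTop 0
  filter_upwards [h1, h2] with t h1 h2
  simp only [eval_add, eval_mul, eval_pow, eval_C, eval_X, eval_neg] at h1 h2
  rw [abs_lt]
  constructor <;> linarith

lemma grab_key : ∀ (q : ℕ) (l : Fin q → ℕ), StrictMono l → (∀ i, 0 < l i) →
    ∃ k : Fin q → ℝ, (∀ i, 0 < k i) ∧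
      ∃ x : Fin q → ℝ, StrictMono x ∧ (∀ i, 0 < x i) ∧
        (∀ i, (grabPol q l k).eval (x i) = 0) ∧
        (∀ i : Fin q, i.val % 2 = 0 → (grabPol q l k).derivative.eval (x i) < 0) ∧
        (∀ i : Fin q, i.val % 2 = 1 → 0 < (grabPol q l k).derivative.eval (x i)) ∧
        (∃ T : ℝ, ∀ t, T ≤ t → 0 < (-1:ℝ) ^ q * (grabPol q l k).eval t) := by
  intro q
  induction q with
  | zero =>
      intro l _ _
      refine ⟨Fin.elim0, fun i => i.elim0, Fin.elim0, fun a => a.elim0, fun i => i.elim0,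
        fun i => i.elim0, fun i => i.elim0, fun i => i.elim0, 0, fun t _ => ?_⟩
      simp [grabPol]
  | succ q ih =>
      intro l hl hl0
      obtain ⟨k', hk', x', hxmono, hxpos, hroot, hBeven, hBodd, T0, hT0⟩ :=
        ih (fun i => l i.castSucc) (fun i j hij => hl (Fin.castSucc_lt_castSucc_iff.2 hij))
          (fun i => hl0 _)
      set l' : Fin q → ℕ := fun i => l i.castSucc with hl'def
      set L : ℕ := l (Fin.last q) with hLdef
      have hL0 : 0 < L := hl0 _
      have hlt : ∀ i : Fin q, l' i < L := fun i => hl (Fin.castSucc_lt_last i)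
      set p' : Polynomial ℝ := grabPol q l' k' with hp'def
      have hdeg : p'.degree < (L:ℕ) := grabPol_degree_lt q l' k' hL0 hlt
      set d : Fin q → ℝ := fun i => p'.derivative.eval (x' i) with hddef
      have hdne : ∀ i, d i ≠ 0 := by
        intro i
        rcases Nat.mod_two_eq_zero_or_one i.val with h | h
        · exact (hBeven i h).ne
        · exact (hBodd i h).ne'
      have hcont : ∀ i : Fin q, ∃ δ, 0 < δ ∧
          ∀ t, |t - x' i| < δ → |p'.derivative.eval t - d i| < |d i| / 2 := by
        intro i
        have hc : ContinuousAt (fun t => p'.derivative.eval t) (x' i) :=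
          (p'.derivative.continuous).continuousAt
        obtain ⟨δ, hδ, hh⟩ := Metric.continuousAt_iff.1 hc (|d i| / 2)
          (half_pos (abs_pos.2 (hdne i)))
        refine ⟨δ, hδ, fun t ht => ?_⟩
        have := hh (show dist t (x' i) < δ by rwa [Real.dist_eq])
        rwa [Real.dist_eq] at this
      choose δf hδf0 hδf using hcont
      set gap : Fin q → ℝ := fun i =>
        if h : i.val + 1 < q then (x' ⟨i.val + 1, h⟩ - x' i) / 2 else 1 with hgapdef
      have hgap : ∀ i, 0 < gap i := by
        intro i
        rw [hgapdef]
        dsimp only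
        split_ifs with h
        · have : x' i < x' ⟨i.val + 1, h⟩ := hxmono (by simp [Fin.lt_def])
          linarith
        · exact one_pos
      obtain ⟨δ, hδ0, hδle⟩ := grab_posMin (fun i => min (min (δf i) (gap i)) (x' i))
        (fun i => lt_min (lt_min (hδf0 i) (hgap i)) (hxpos i))
      have hδ1 : ∀ i, δ ≤ δf i := fun i => ((hδle i).trans (min_le_left _ _)).trans (min_le_left _ _)
      have hδ2 : ∀ i, δ ≤ gap i := fun i => ((hδle i).trans (min_le_left _ _)).trans (min_le_right _ _)
      have hδ3 : ∀ i, δ ≤ x' i := fun i => (hδle i).trans (min_le_right _ _)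
      have hnear : ∀ i, ∃ a b : ℝ, x' i - δ < a ∧ a < x' i ∧ x' i < b ∧ b < x' i + δ ∧
          d i * p'.eval a < 0 ∧ 0 < d i * p'.eval b :=
        fun i => grab_sign_near (p'.hasDerivAt (x' i)) (hroot i) (hdne i) hδ0
      choose a b ha1 ha2 hb1 hb2 hPa hPb using hnear
      obtain ⟨M, hM⟩ := grab_ub (fun i => x' i + δ)
      set T1 : ℝ := max (max M T0) 1 with hT1def
      have hT1_1 : (1:ℝ) ≤ T1 := le_max_right _ _
      have hT1pos : (0:ℝ) < T1 := lt_of_lt_of_le one_pos hT1_1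
      have hT1M : ∀ i, x' i + δ ≤ T1 := fun i => (hM i).trans ((le_max_left M T0).trans (le_max_left _ _))
      have hc1 : 0 < (-1:ℝ)^q * p'.eval T1 := hT0 T1 ((le_max_right M T0).trans (le_max_left _ _))
      have hPane : ∀ i, p'.eval (a i) ≠ 0 := by
        intro i h
        have := hPa i
        rw [h, mul_zero] at this
        exact absurd this (lt_irrefl 0)
      have hPbne : ∀ i, p'.eval (b i) ≠ 0 := by
        intro i h
        have := hPb i
        rw [h, mul_zero] at this
        exact absurd this (lt_irrefl 0)
      obtain ⟨μ, hμ0, hμle⟩ := grab_posMin (fun i => min |p'.eval (a i)| |p'.eval (b i)|)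
        (fun i => lt_min (abs_pos.2 (hPane i)) (abs_pos.2 (hPbne i)))
      obtain ⟨ν, hν0, hνle⟩ := grab_posMin (fun i => |d i| / 2)
        (fun i => half_pos (abs_pos.2 (hdne i)))
      have hT1L : (0:ℝ) < T1 ^ L := pow_pos hT1pos L
      have hT1L1 : (0:ℝ) < (L:ℝ) * T1 ^ (L - 1) :=
        mul_pos (by exact_mod_cast hL0) (pow_pos hT1pos _)
      set ε0 : ℝ := min (min (μ / T1 ^ L) (ν / ((L:ℝ) * T1 ^ (L - 1))))
        ((-1:ℝ)^q * p'.eval T1 / T1 ^ L) with hε0def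
      have hε00 : 0 < ε0 :=
        lt_min (lt_min (div_pos hμ0 hT1L) (div_pos hν0 hT1L1)) (div_pos hc1 hT1L)
      set ph : Polynomial ℝ := X * p'.derivative - C (L:ℝ) * p' with hphdef
      have hph0 : ph.eval 0 = -(L:ℝ) := by
        rw [hphdef]
        simp [hp'def, grabPol_eval_zero q l' k' (fun i => hl0 _)]
      have hphne : ph ≠ 0 := by
        intro h
        rw [h, eval_zero] at hph0
        have : (L:ℝ) ≠ 0 := by exact_mod_cast hL0.ne'
        exact this (by linarith)
      set F : Set ℝ := (fun t => (-1:ℝ)^q * p'.eval t / t ^ L) '' {t | ph.IsRoot t} with hFdef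
      have hFfin : F.Finite := (Polynomial.finite_setOf_isRoot hphne).image _
      obtain ⟨ε, hεmem, hεF⟩ := ((Set.Ioo_infinite hε00).diff hFfin).nonempty
      obtain ⟨hε0', hεlt⟩ := hεmem
      set σ : ℝ := (-1:ℝ)^(q+1) with hσdef
      have hσ2 : σ * σ = 1 := by
        rw [hσdef, ← pow_add]
        exact Even.neg_one_pow ⟨q+1, by ring⟩
      have hσne : σ ≠ 0 := by
        rw [hσdef]
        exact pow_ne_zero _ (by norm_num)
      have hσq : σ = -(-1:ℝ)^q := by rw [hσdef, pow_succ]; ring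
      have hpneq : grabPol (q+1) l (Fin.snoc k' ε) = p' + C (σ * ε) * X ^ L :=
        grabPol_snoc q l k' ε
      set pn : Polynomial ℝ := grabPol (q+1) l (Fin.snoc k' ε) with hpndef
      have hPt : ∀ t, pn.eval t = p'.eval t + σ * ε * t ^ L := by
        intro t
        rw [hpneq]
        simp
      have hdn : pn.derivative = p'.derivative + C (σ * ε * L) * X ^ (L - 1) := by
        rw [hpneq, derivative_add, derivative_C_mul_X_pow]
      have hdPt : ∀ t, pn.derivative.eval t = p'.derivative.eval t + σ * ε * L * t ^ (L - 1) := by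
        intro t
        rw [hdn]
        simp
      have hε1 : ε * T1 ^ L < μ := by
        have h := hεlt.trans_le ((min_le_left _ _).trans (min_le_left _ _))
        rwa [lt_div_iff₀ hT1L] at h
      have hε2 : ε * ((L:ℝ) * T1 ^ (L - 1)) < ν := by
        have h := hεlt.trans_le ((min_le_left _ _).trans (min_le_right _ _))
        rwa [lt_div_iff₀ hT1L1] at h
      have hε3 : ε * T1 ^ L < (-1:ℝ)^q * p'.eval T1 := by
        have h := hεlt.trans_le (min_le_right _ _)
        rwa [lt_div_iff₀ hT1L] at h
      -- all positive roots of pn are simple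
      have hsimple : ∀ t : ℝ, 0 < t → pn.eval t = 0 → pn.derivative.eval t ≠ 0 := by
        intro t ht h0 hD
        rw [hPt] at h0
        rw [hdPt] at hD
        have htL : (0:ℝ) < t ^ L := pow_pos ht L
        have hpow : t ^ (L - 1) * t = t ^ L := by
          rw [← pow_succ]
          congr 1
          omega
        have e1 : p'.eval t = -(σ * ε * t ^ L) := by linarith
        have e2 : p'.derivative.eval t = -(σ * ε * (L:ℝ) * t ^ (L - 1)) := by
          have : p'.derivative.eval t + σ * ε * (L:ℝ) * t ^ (L - 1) = 0 := hD
          linarith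
        have hph_root : ph.IsRoot t := by
          show ph.eval t = 0
          rw [hphdef]
          simp only [eval_sub, eval_mul, eval_X, eval_C]
          rw [e1, e2]
          have : t * -(σ * ε * (L:ℝ) * t ^ (L - 1)) = -(σ * ε * (L:ℝ) * (t ^ (L - 1) * t)) := by
            ring
          rw [this, hpow]
          ring
        have hεeq : ε = (-1:ℝ)^q * p'.eval t / t ^ L := by
          have hqq : (-1:ℝ)^q * (-1:ℝ)^q = 1 := by
            rw [← pow_add]
            exact Even.neg_one_pow ⟨q, by ring⟩
          have hnum : (-1:ℝ)^q * p'.eval t = ε * t ^ L := by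
            rw [e1, hσq]
            have hh : (-1:ℝ)^q * -(-(-1:ℝ)^q * ε * t ^ L) =
                ((-1:ℝ)^q * (-1:ℝ)^q) * (ε * t ^ L) := by ring
            rw [hh, hqq, one_mul]
          rw [hnum, mul_div_assoc, div_self htL.ne', mul_one]
        exact hεF ⟨t, hph_root, hεeq.symm⟩
      have habound : ∀ i, 0 ≤ a i := fun i => by linarith [ha1 i, hδ3 i]
      have hbT1 : ∀ i, b i ≤ T1 := fun i => by linarith [hb2 i, hT1M i]
      have hσabs : |σ| = 1 := by rw [hσdef, abs_pow, abs_neg, abs_one, one_pow]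
      have hpert : ∀ t : ℝ, 0 ≤ t → t ≤ T1 → |pn.eval t - p'.eval t| ≤ ε * T1 ^ L := by
        intro t h0 h1
        rw [hPt]
        simp only [add_sub_cancel_left]
        have habs : |σ * ε * t ^ L| = ε * t ^ L := by
          rw [abs_mul, abs_mul, hσabs, one_mul, abs_of_pos hε0',
            abs_of_nonneg (pow_nonneg h0 L)]
        rw [habs]
        exact mul_le_mul_of_nonneg_left (pow_le_pow_left₀ h0 h1 L) hε0'.le
      have hsignA : ∀ i, d i * pn.eval (a i) < 0 := by
        intro i
        apply grab_mul_sign_neg _ (hPa i)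
        calc |pn.eval (a i) - p'.eval (a i)| ≤ ε * T1 ^ L :=
              hpert _ (habound i) (by linarith [ha2 i, hb1 i, hbT1 i])
          _ < μ := hε1
          _ ≤ |p'.eval (a i)| := (hμle i).trans (min_le_left _ _)
      have hsignB : ∀ i, 0 < d i * pn.eval (b i) := by
        intro i
        apply grab_mul_sign_pos _ (hPb i)
        calc |pn.eval (b i) - p'.eval (b i)| ≤ ε * T1 ^ L :=
              hpert _ (by linarith [habound i, ha2 i, hb1 i]) (hbT1 i)
          _ < μ := hε1
          _ ≤ |p'.eval (b i)| := (hμle i).trans (min_le_right _ _)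
      have hivt : ∀ i, ∃ t ∈ Ioo (a i) (b i), pn.eval t = 0 := by
        intro i
        exact grab_ivt pn.continuous ((ha2 i).trans (hb1 i)) (hsignA i) (hsignB i)
      choose xn hxnmem hxn0 using hivt
      have hxnx' : ∀ i, |xn i - x' i| < δ := by
        intro i
        rw [abs_lt]
        constructor
        · linarith [(hxnmem i).1, ha1 i]
        · linarith [(hxnmem i).2, hb2 i]
      have hxnpos : ∀ i, 0 < xn i := fun i => lt_of_le_of_lt (habound i) (hxnmem i).1
      have hxnT1 : ∀ i, xn i ≤ T1 := fun i => le_of_lt (lt_of_lt_of_le (hxnmem i).2 (hbT1 i))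
      have hder_close : ∀ i, |pn.derivative.eval (xn i) - d i| < |d i| := by
        intro i
        have h1 : |p'.derivative.eval (xn i) - d i| < |d i| / 2 :=
          hδf i _ (lt_of_lt_of_le (hxnx' i) (hδ1 i))
        have h2 : |σ * ε * (L:ℝ) * (xn i) ^ (L - 1)| ≤ ε * ((L:ℝ) * T1 ^ (L - 1)) := by
          have : |σ * ε * (L:ℝ) * (xn i) ^ (L - 1)| = ε * ((L:ℝ) * (xn i) ^ (L - 1)) := by
            rw [abs_mul, abs_mul, abs_mul, hσabs, one_mul, abs_of_pos hε0',
              abs_of_nonneg (by exact_mod_cast (Nat.zero_le L) : (0:ℝ) ≤ (L:ℝ)),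
              abs_of_nonneg (pow_nonneg (hxnpos i).le _), mul_assoc]
          rw [this]
          apply mul_le_mul_of_nonneg_left _ hε0'.le
          apply mul_le_mul_of_nonneg_left _ (by exact_mod_cast (Nat.zero_le L) : (0:ℝ) ≤ (L:ℝ))
          exact pow_le_pow_left₀ (hxnpos i).le (hxnT1 i) _
        have h3 : pn.derivative.eval (xn i) - d i =
            (p'.derivative.eval (xn i) - d i) + σ * ε * (L:ℝ) * (xn i) ^ (L - 1) := by
          rw [hdPt]
          ring
        calc |pn.derivative.eval (xn i) - d i|
            ≤ |p'.derivative.eval (xn i) - d i| + |σ * ε * (L:ℝ) * (xn i) ^ (L - 1)| := by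
              rw [h3]; exact abs_add_le _ _
          _ < |d i| / 2 + ν := by
              have := h2.trans_lt hε2
              linarith
          _ ≤ |d i| / 2 + |d i| / 2 := by linarith [hνle i]
          _ = |d i| := by ring
      have hsignd : ∀ i, (0 < d i → 0 < pn.derivative.eval (xn i)) ∧
          (d i < 0 → pn.derivative.eval (xn i) < 0) := fun i => grab_same_sign (hder_close i)
      -- the extra largest root
      obtain ⟨N, hN⟩ := eventually_atTop.1 (grab_dom hL0 hdeg hε0')
      set T2 : ℝ := max N (T1 + 1) with hT2def
      have hT2N : |p'.eval T2| < ε * T2 ^ L := hN T2 (le_max_left _ _)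
      have hT1T2 : T1 < T2 := lt_of_lt_of_le (by linarith) (le_max_right _ _)
      set g : ℝ → ℝ := fun t => σ * pn.eval t with hgdef
      have hgT2 : 0 < g T2 := by
        rw [hgdef]
        dsimp only
        rw [hPt]
        have hexp : σ * (p'.eval T2 + σ * ε * T2 ^ L) =
            σ * p'.eval T2 + (σ * σ) * (ε * T2 ^ L) := by ring
        rw [hexp, hσ2, one_mul]
        have h1 : -|p'.eval T2| ≤ σ * p'.eval T2 := by
          have : |σ * p'.eval T2| = |p'.eval T2| := by rw [abs_mul, hσabs, one_mul]
          linarith [neg_abs_le (σ * p'.eval T2), this]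
        linarith
      have hgT1 : g T1 < 0 := by
        rw [hgdef]
        dsimp only
        rw [hPt]
        have hexp : σ * (p'.eval T1 + σ * ε * T1 ^ L) =
            σ * p'.eval T1 + (σ * σ) * (ε * T1 ^ L) := by ring
        rw [hexp, hσ2, one_mul, hσq]
        linarith [hε3]
      set K : Set ℝ := {t | t ∈ Icc T1 T2 ∧ g t ≤ 0} with hKdef
      have hT1K : T1 ∈ K := ⟨⟨le_refl _, hT1T2.le⟩, hgT1.le⟩
      have hKbdd : BddAbove K := ⟨T2, fun t ht => ht.1.2⟩
      set xl : ℝ := sSup K with hxldef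
      have hxlge : T1 ≤ xl := le_csSup hKbdd hT1K
      have hxlle : xl ≤ T2 := csSup_le ⟨T1, hT1K⟩ (fun t ht => ht.1.2)
      have hgcont : Continuous g := continuous_const.mul pn.continuous
      have hgxl_le : g xl ≤ 0 := by
        have h1 : xl ∈ closure K := csSup_mem_closure ⟨T1, hT1K⟩ hKbdd
        have h2 : closure K ⊆ {t : ℝ | g t ≤ 0} := by
          rw [← (isClosed_le hgcont continuous_const).closure_eq]
          exact closure_mono (fun t ht => ht.2)
        exact h2 h1
      have hxlT2 : xl < T2 := by
        rcases lt_or_eq_of_le hxlle with h | h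
        · exact h
        · rw [h] at hgxl_le
          exact absurd hgT2 (not_lt.2 hgxl_le)
      have hright : ∀ t, xl < t → t ≤ T2 → 0 < g t := by
        intro t h1 h2
        by_contra hcon
        push_neg at hcon
        have : t ∈ K := ⟨⟨hxlge.trans h1.le, h2⟩, hcon⟩
        exact absurd (le_csSup hKbdd this) (not_le.2 h1)
      have hg_ev : ∀ᶠ t in 𝓝[>] xl, 0 < g t := by
        filter_upwards [Ioc_mem_nhdsGT hxlT2] with t ht
        exact hright t ht.1 ht.2
      have hg0 : g xl = 0 :=
        le_antisymm hgxl_le (ge_of_tendsto hgcont.continuousAt.continuousWithinAt.tendsto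
          (hg_ev.mono fun t ht => ht.le))
      have hPxl : pn.eval xl = 0 := by
        have : σ * pn.eval xl = 0 := hg0
        rcases mul_eq_zero.1 this with h | h
        · exact absurd h hσne
        · exact h
      have hxlpos : 0 < xl := lt_of_lt_of_le (lt_of_lt_of_le one_pos hT1_1) hxlge
      have hdnexl : pn.derivative.eval xl ≠ 0 := hsimple xl hxlpos hPxl
      have hgder : HasDerivAt g (σ * pn.derivative.eval xl) xl :=
        (pn.hasDerivAt xl).const_mul σ
      have hdg_ge : 0 ≤ σ * pn.derivative.eval xl := by
        have hs := hasDerivAt_iff_tendsto_slope.1 hgder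
        have hs' : Tendsto (slope g xl) (𝓝[>] xl) (𝓝 (σ * pn.derivative.eval xl)) :=
          hs.mono_left (nhdsWithin_mono xl (fun t ht => ne_of_gt ht))
        apply ge_of_tendsto hs'
        filter_upwards [hg_ev, self_mem_nhdsWithin] with t ht hmem
        rw [slope_def_field, hg0, sub_zero]
        exact div_nonneg ht.le (by have : xl < t := hmem; linarith)
      have hdg_pos : 0 < σ * pn.derivative.eval xl :=
        lt_of_le_of_ne hdg_ge (Ne.symm (mul_ne_zero hσne hdnexl))
      -- assemble
      refine ⟨Fin.snoc k' ε, ?_, Fin.snoc xn xl, ?_, ?_, ?_, ?_, ?_, ?_⟩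
      · intro i
        refine Fin.lastCases ?_ ?_ i
        · rw [Fin.snoc_last]; exact hε0'
        · intro j; rw [Fin.snoc_castSucc]; exact hk' j
      · rw [Fin.strictMono_iff_lt_succ]
        intro i
        rw [Fin.snoc_castSucc]
        by_cases h : i.val + 1 < q
        · have hsucc : i.succ = Fin.castSucc ⟨i.val + 1, h⟩ := by
            apply Fin.ext
            simp
          rw [hsucc, Fin.snoc_castSucc]
          have hgapi : gap i = (x' ⟨i.val + 1, h⟩ - x' i) / 2 := by
            rw [hgapdef]; exact dif_pos h
          have h1 : xn i < x' i + δ := by linarith [(hxnmem i).2, hb2 i]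
          have h2 : x' ⟨i.val + 1, h⟩ - δ < xn ⟨i.val + 1, h⟩ := by
            linarith [(hxnmem ⟨i.val + 1, h⟩).1, ha1 ⟨i.val + 1, h⟩]
          have h3 := hδ2 i
          rw [hgapi] at h3
          linarith
        · have hq : i.val + 1 = q := by omega
          have hsucc : i.succ = Fin.last q := by
            apply Fin.ext
            simp [hq]
          rw [hsucc, Fin.snoc_last]
          have h1 : xn i < x' i + δ := by linarith [(hxnmem i).2, hb2 i]
          linarith [hT1M i, hxlge]
      · intro i
        refine Fin.lastCases ?_ ?_ i
        · rw [Fin.snoc_last]; exact hxlpos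
        · intro j; rw [Fin.snoc_castSucc]; exact hxnpos j
      · intro i
        refine Fin.lastCases ?_ ?_ i
        · rw [Fin.snoc_last, ← hpndef]; exact hPxl
        · intro j; rw [Fin.snoc_castSucc, ← hpndef]; exact hxn0 j
      · intro i
        refine Fin.lastCases ?_ ?_ i
        · intro hpar
          rw [Fin.val_last] at hpar
          rw [Fin.snoc_last, ← hpndef]
          have hσval : σ = -1 := by
            rw [hσdef]
            exact Odd.neg_one_pow (Even.add_one (Nat.even_iff.2 hpar))
          rw [hσval] at hdg_pos
          linarith
        · intro j hpar
          rw [Fin.coe_castSucc] at hpar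
          rw [Fin.snoc_castSucc, ← hpndef]
          exact (hsignd j).2 (hBeven j hpar)
      · intro i
        refine Fin.lastCases ?_ ?_ i
        · intro hpar
          rw [Fin.val_last] at hpar
          rw [Fin.snoc_last, ← hpndef]
          have hσval : σ = 1 := by
            rw [hσdef]
            exact Even.neg_one_pow (Odd.add_one (Nat.odd_iff.2 hpar))
          rw [hσval] at hdg_pos
          linarith
        · intro j hpar
          rw [Fin.coe_castSucc] at hpar
          rw [Fin.snoc_castSucc, ← hpndef]
          exact (hsignd j).1 (hBodd j hpar)
      · refine ⟨N, fun t ht => ?_⟩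
        rw [← hpndef, hPt]
        have hNt : |p'.eval t| < ε * t ^ L := hN t ht
        have hexp : (-1:ℝ)^(q+1) * (p'.eval t + σ * ε * t ^ L) =
            σ * p'.eval t + (σ * σ) * (ε * t ^ L) := by rw [hσdef]; ring
        rw [hexp, hσ2, one_mul]
        have h1 : -|p'.eval t| ≤ σ * p'.eval t := by
          have : |σ * p'.eval t| = |p'.eval t| := by rw [abs_mul, hσabs, one_mul]
          linarith [neg_abs_le (σ * p'.eval t), this]
        linarith



open Finset in
/-- Grabiner's lemma: the Descartes bound is achieved.  For exponents
`0 < l 0 < l 1 < ⋯ < l (q-1)`, there are positive coefficients `k i` such that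
`P(x) = 1 - k₀ x^{l₀} + k₁ x^{l₁} - ⋯ + (-1)^q k_{q-1} x^{l_{q-1}}`
has `q` distinct positive roots `0 < x₀ < x₁ < ⋯ < x_{q-1}`, with
`P' < 0` at roots of even (0-based) index and `P' > 0` at roots of odd index. -/
theorem grabiner_descartes_bound_achieved (q : ℕ) (l : Fin q → ℕ)
    (hl : StrictMono l) (hl0 : ∀ i, 0 < l i) :
    ∃ k : Fin q → ℝ, (∀ i, 0 < k i) ∧
      ∃ x : Fin q → ℝ, StrictMono x ∧ (∀ i, 0 < x i) ∧
        (let P : ℝ → ℝ := fun t => 1 + ∑ i : Fin q, (-1) ^ (i.val + 1) * k i * t ^ (l i)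
        (∀ i, P (x i) = 0) ∧
        (∀ i : Fin q, i.val % 2 = 0 → deriv P (x i) < 0) ∧
        (∀ i : Fin q, i.val % 2 = 1 → 0 < deriv P (x i))) := by
  obtain ⟨k, hk, x, hmono, hpos, hroot, heven, hodd, -⟩ := grab_key q l hl hl0
  have hPfun : (fun t : ℝ => 1 + ∑ i : Fin q, (-1) ^ (i.val + 1) * k i * t ^ (l i)) =
      fun t => (grabPol q l k).eval t := funext fun t => (grabPol_eval q l k t).symm
  refine ⟨k, hk, x, hmono, hpos, ?_, ?_, ?_⟩
  · intro i
    show (1 : ℝ) + ∑ j : Fin q, (-1) ^ (j.val + 1) * k j * (x i) ^ (l j) = 0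
    rw [← grabPol_eval]
    exact hroot i
  · intro i hpar
    show deriv (fun t : ℝ => 1 + ∑ j : Fin q, (-1) ^ (j.val + 1) * k j * t ^ (l j)) (x i) < 0
    rw [hPfun, Polynomial.deriv]
    exact heven i hpar
  · intro i hpar
    show 0 < deriv (fun t : ℝ => 1 + ∑ j : Fin q, (-1) ^ (j.val + 1) * k j * t ^ (l j)) (x i)
    rw [hPfun, Polynomial.deriv]
    exact hodd i hpar
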